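/- Let M be a nonempty compact, connected, Hausdorff topological manifold (a topological space locally homeomorphic to Euclidean space ℝⁿ via an atlas of charts). If f : M → M is a covering map that is homotopic to the identity map of M, then f is injective. -/

import Mathlib

open Set unitInterval

/-- Local lifting data near a point `y₀`: an open neighborhood `U`, continuous on which
is a map `G` whose value at `y` is the endpoint of a lift (starting at `y`) of the
path `t ↦ H (t, y)`. -/
private lemma covering_range_isClopen
    {E X : Type*} [TopologicalSpace E] [TopologicalSpace X] {f : E → X}
    (hf : IsCoveringMap f) : IsClopen (Set.range f) := by
  constructor
  · rw [← isOpen_compl_iff, isOpen_iff_forall_mem_open]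
    intro y hy
    obtain ⟨_, U, hyU, hU, _, Hh, _⟩ := hf y
    refine ⟨U, ?_, hU, hyU⟩
    rintro u hu ⟨e, rfl⟩
    exact hy ⟨(Hh ⟨e, hu⟩).2.1, (Hh ⟨e, hu⟩).2.2⟩
  · rw [isOpen_iff_forall_mem_open]
    rintro y ⟨e, rfl⟩
    obtain ⟨_, U, hyU, hU, _, Hh, hH⟩ := hf (f e)
    refine ⟨U, ?_, hU, hyU⟩
    intro u hu
    refine ⟨(Hh.symm (⟨u, hu⟩, ⟨e, rfl⟩)).1, ?_⟩
    rw [← hH, Homeomorph.apply_symm_apply]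

private lemma covering_local_lift
    {M : Type*} [TopologicalSpace M] {f : C(M, M)} (hcov : IsCoveringMap f)
    (H : ContinuousMap.Homotopy f (ContinuousMap.id M)) (y₀ : M) :
    ∃ U : Set M, IsOpen U ∧ y₀ ∈ U ∧ ∃ G : M → M, ContinuousOn G U ∧
      ∀ y ∈ U, ∃ Γ : C(unitInterval, M),
        (∀ t, f (Γ t) = H (t, y)) ∧ Γ 0 = y ∧ Γ 1 = G y := by
  classical
  -- basic rectangles on which `H` lands in a trivialized part
  have key : ∀ t : unitInterval, ∃ (W : Set unitInterval) (U : Set M),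
      IsOpen W ∧ IsOpen U ∧ t ∈ W ∧ y₀ ∈ U ∧
      ∃ (x : M) (T : Bundle.Trivialization (↥(f ⁻¹' {x})) (⇑f)),
        ∀ s ∈ W, ∀ y ∈ U, H (s, y) ∈ T.baseSet := by
    intro t
    set x := H (t, y₀) with hx
    haveI : Nonempty ↥(f ⁻¹' {x}) := by
      have hsub := (isPreconnected_range (f := fun s : unitInterval => H (s, y₀))
        (H.continuous.comp (Continuous.prodMk continuous_id continuous_const))).subset_isClopen
        (covering_range_isClopen hcov) ⟨f y₀, ⟨0, H.apply_zero y₀⟩, y₀, rfl⟩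
      obtain ⟨e, he⟩ := hsub ⟨t, rfl⟩
      exact ⟨⟨e, he⟩⟩
    obtain ⟨u, v, hu, hv, htu, hyv, huv⟩ := isOpen_prod_iff.mp
      ((hcov x).toTrivialization.open_baseSet.preimage H.continuous) t y₀
      (by exact (hcov x).mem_toTrivialization_baseSet)
    exact ⟨u, v, hu, hv, htu, hyv, x, (hcov x).toTrivialization,
      fun s hs y hy => huv (Set.mk_mem_prod hs hy)⟩
  choose W U hWo hUo htW hyU x T hT using key
  -- finite subcover and Lebesgue number
  obtain ⟨F, hF⟩ := isCompact_univ.elim_finite_subcover W hWo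
    (fun t _ => Set.mem_iUnion.mpr ⟨t, htW t⟩)
  obtain ⟨δ, hδpos, hδ⟩ := lebesgue_number_lemma_of_metric (c := fun i : F => W i)
    isCompact_univ (fun i => hWo i)
    (by intro t ht; obtain ⟨s, hs⟩ := Set.mem_iUnion₂.mp (hF ht)
        exact Set.mem_iUnion.mpr ⟨⟨s, hs.1⟩, hs.2⟩)
  set U₀ : Set M := ⋂ t ∈ F, U t with hU₀
  have hU₀o : IsOpen U₀ := isOpen_biInter_finset fun t _ => hUo t
  have hyU₀ : y₀ ∈ U₀ := Set.mem_biInter fun t _ => hyU t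
  obtain ⟨m, hm⟩ := exists_nat_one_div_lt hδpos
  set n : ℕ := m + 1 with hn
  have hnpos : (0:ℝ) < n := by positivity
  -- partition points
  set sp : ℕ → unitInterval := fun k => ⟨min ((k:ℝ) / n) 1,
    le_min (by positivity) zero_le_one, min_le_right _ _⟩ with hsp
  have hspcoe : ∀ k, k ≤ n → (sp k : ℝ) = (k:ℝ)/n := by
    intro k hk
    have hkn : (k:ℝ) ≤ n := by exact_mod_cast hk
    simp only [hsp, min_eq_left (div_le_one_of_le₀ hkn hnpos.le)]
  have hsp0 : sp 0 = 0 := by ext; simp [hsp]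
  have hspn : sp n = 1 := by ext; rw [hspcoe n le_rfl]; field_simp; rfl
  have hsple : ∀ k, sp k ≤ sp (k+1) := by
    intro k
    show (sp k : ℝ) ≤ sp (k+1)
    exact min_le_min (by gcongr; exact_mod_cast Nat.le_succ k) le_rfl
  have hsplt : ∀ k, k + 1 ≤ n → sp k < sp (k+1) := by
    intro k hk
    show (sp k : ℝ) < sp (k+1)
    rw [hspcoe k (le_trans (Nat.le_succ k) hk), hspcoe (k+1) hk]
    rw [div_lt_div_iff_of_pos_right hnpos]
    exact_mod_cast Nat.lt_succ_self k
  -- trivializations along the partition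
  have hTk : ∀ k, k + 1 ≤ n → ∃ (x : M) (T : Bundle.Trivialization (↥(f ⁻¹' {x})) (⇑f)),
      ∀ t : unitInterval, sp k ≤ t → t ≤ sp (k+1) → ∀ y ∈ U₀, H (t, y) ∈ T.baseSet := by
    intro k hk
    obtain ⟨i, hi⟩ := hδ (sp k) trivial
    refine ⟨x i, T i, fun t ht1 ht2 y hy => hT i t ?_ y (Set.biInter_subset_of_mem i.2 hy)⟩
    apply hi
    rw [Metric.mem_ball, Subtype.dist_eq, Real.dist_eq, abs_of_nonneg (by
      exact sub_nonneg.mpr ht1)]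
    have h2 : (t:ℝ) ≤ (k+1)/n := le_trans ht2 (by rw [hspcoe (k+1) hk]; push_cast; exact le_rfl)
    have h1 : ((k:ℝ))/n ≤ (sp k : ℝ) := by rw [hspcoe k (le_trans (Nat.le_succ k) hk)]
    have hstep : (1:ℝ)/n < δ := by rw [hn]; push_cast; exact hm
    calc (t:ℝ) - sp k ≤ ((k:ℝ)+1)/n - k/n := sub_le_sub h2 h1
      _ = 1/n := by rw [div_sub_div_same]; norm_num
      _ < δ := hstep
  choose xk Tk hTk' using hTk
  -- main induction along the partition
  have main : ∀ k, k ≤ n → ∃ G : M → M, ContinuousOn G U₀ ∧ ∀ y ∈ U₀,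
      f (G y) = H (sp k, y) ∧ ∃ Γ : C(unitInterval, M),
        (∀ t, f (Γ t) = H (min t (sp k), y)) ∧ Γ 0 = y ∧ ∀ t, sp k ≤ t → Γ t = G y := by
    intro k
    induction k with
    | zero =>
      intro _
      refine ⟨id, continuousOn_id, fun y hy => ?_⟩
      have h0 : ∀ t : unitInterval, min t (sp 0) = 0 := by
        intro t; rw [hsp0]; exact min_eq_right t.2.1
      refine ⟨by rw [hsp0]; exact (H.apply_zero y).symm, ContinuousMap.const _ y,
        fun t => by rw [h0 t]; exact (H.apply_zero y).symm, rfl, fun t _ => rfl⟩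
    | succ k ih =>
      intro hk1
      have hk : k ≤ n := le_trans (Nat.le_succ k) hk1
      obtain ⟨G, hGc, hG⟩ := ih hk
      set T := Tk k hk1 with hTdef
      have hbase : ∀ t : unitInterval, sp k ≤ t → t ≤ sp (k+1) → ∀ y ∈ U₀,
          H (t, y) ∈ T.baseSet := hTk' k hk1
      have hsrc : ∀ y ∈ U₀, G y ∈ T.source := fun y hy => T.mem_source.mpr
        (by rw [(hG y hy).1]; exact hbase (sp k) le_rfl (hsple k) y hy)
      set G' : M → M :=
        fun y => T.toPartialHomeomorph.symm (H (sp (k+1), y), (T (G y)).2) with hG'def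
      have htgt : ∀ t : unitInterval, sp k ≤ t → t ≤ sp (k+1) → ∀ y ∈ U₀,
          ((H (t, y), (T (G y)).2) : M × ↥(f ⁻¹' {xk k hk1})) ∈ T.target :=
        fun t h1 h2 y hy => T.mem_target.mpr (hbase t h1 h2 y hy)
      have hfG' : ∀ y ∈ U₀, f (G' y) = H (sp (k+1), y) := fun y hy =>
        T.proj_symm_apply (htgt (sp (k+1)) (hsple k) le_rfl y hy)
      have hc : ContinuousOn G' U₀ := by
        apply T.toPartialHomeomorph.continuousOn_symm.comp
        · apply ContinuousOn.prodMk
          · exact (H.continuous.comp (continuous_const.prodMk continuous_id)).continuousOn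
          · exact continuous_snd.comp_continuousOn
              (T.continuousOn_toFun.comp hGc (fun y hy => hsrc y hy))
        · exact fun y hy => htgt (sp (k+1)) (hsple k) le_rfl y hy
      refine ⟨G', hc, fun y hy => ⟨hfG' y hy, ?_⟩⟩
      obtain ⟨Γ, hΓlift, hΓ0, hΓend⟩ := (hG y hy).2
      have hGyT : T (G y) = (H (sp k, y), (T (G y)).2) := by
        nth_rewrite 1 [← T.mk_proj_snd (hsrc y hy)]
        rw [(hG y hy).1]
      have hfr : ∀ t : unitInterval, (t:ℝ) = (sp k : ℝ) →
          Γ t = T.toPartialHomeomorph.symm (H (min t (sp (k+1)), y), (T (G y)).2) := by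
        intro t ht
        have htk : t = sp k := Subtype.ext ht
        rw [htk, min_eq_left (hsple k), ← (hG y hy).1]
        exact (hΓend (sp k) le_rfl).trans (T.symm_apply_mk_proj (hsrc y hy)).symm
      refine ⟨⟨fun t => if (t:ℝ) ≤ (sp k : ℝ) then Γ t
        else T.toPartialHomeomorph.symm (H (min t (sp (k+1)), y), (T (G y)).2), ?_⟩, ?_, ?_, ?_⟩
      · apply continuous_if_le continuous_subtype_val continuous_const
          Γ.continuous.continuousOn ?_ (fun t ht => hfr t ht)
        apply T.toPartialHomeomorph.continuousOn_symm.comp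
        · exact ((H.continuous.comp ((continuous_id.min continuous_const).prodMk
            continuous_const)).prodMk continuous_const).continuousOn
        · intro t ht
          exact htgt (min t (sp (k+1))) (le_min (Subtype.coe_le_coe.mp ht) (hsple k))
            (min_le_right _ _) y hy
      · intro t
        by_cases hle : (t:ℝ) ≤ (sp k : ℝ)
        · simp only [ContinuousMap.coe_mk, if_pos hle]
          have h1 : min t (sp k) = t := min_eq_left (Subtype.coe_le_coe.mp hle)
          have h2 : min t (sp (k+1)) = t :=
            min_eq_left (le_trans (Subtype.coe_le_coe.mp hle) (hsple k))
          rw [hΓlift t, h1, h2]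
        · simp only [ContinuousMap.coe_mk, if_neg hle]
          exact T.proj_symm_apply (htgt (min t (sp (k+1)))
            (le_min (le_of_not_ge (fun h => hle (Subtype.coe_le_coe.mpr h))) (hsple k))
            (min_le_right _ _) y hy)
      · show (if ((0:unitInterval):ℝ) ≤ (sp k : ℝ) then Γ 0 else _) = y
        rw [if_pos (by exact_mod_cast (sp k).2.1), hΓ0]
      · intro t ht
        have hnle : ¬ ((t:ℝ) ≤ (sp k : ℝ)) := by
          push_neg
          exact_mod_cast lt_of_lt_of_le (hsplt k hk1) ht
        show (if (t:ℝ) ≤ (sp k : ℝ) then Γ t else _) = G' y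
        rw [if_neg hnle, min_eq_right ht]
  obtain ⟨G, hGc, hG⟩ := main n le_rfl
  refine ⟨U₀, hU₀o, hyU₀, G, hGc, fun y hy => ?_⟩
  obtain ⟨hfG, Γ, hl, h0, hend⟩ := hG y hy
  refine ⟨Γ, fun t => ?_, h0, hend 1 (le_of_eq hspn)⟩
  rw [hl t, hspn, min_eq_left le_one']

/-- A covering map homotopic to the identity admits a continuous section. -/
private lemma covering_section
    {M : Type*} [TopologicalSpace M] {f : C(M, M)} (hcov : IsCoveringMap f)
    (H : ContinuousMap.Homotopy f (ContinuousMap.id M)) :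
    ∃ g : M → M, Continuous g ∧ ∀ y, f (g y) = y := by
  classical
  have huniq : ∀ (y e e' : M),
      (∃ Γ : C(unitInterval, M), (∀ t, f (Γ t) = H (t, y)) ∧ Γ 0 = y ∧ Γ 1 = e) →
      (∃ Γ : C(unitInterval, M), (∀ t, f (Γ t) = H (t, y)) ∧ Γ 0 = y ∧ Γ 1 = e') →
      e = e' := by
    rintro y e e' ⟨Γ, h1, h2, h3⟩ ⟨Γ', h1', h2', h3'⟩
    have h := hcov.eq_of_comp_eq (A := unitInterval) Γ.continuous Γ'.continuous
      (funext fun t => (h1 t).trans (h1' t).symm) 0 (h2.trans h2'.symm)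
    rw [← h3, ← h3']
    exact congrFun h 1
  have hex : ∀ y : M, ∃ e : M, ∃ Γ : C(unitInterval, M),
      (∀ t, f (Γ t) = H (t, y)) ∧ Γ 0 = y ∧ Γ 1 = e := by
    intro y
    obtain ⟨U, hUo, hyU, G, hGc, hG⟩ := covering_local_lift hcov H y
    exact ⟨G y, hG y hyU⟩
  choose g hg using hex
  refine ⟨g, ?_, ?_⟩
  · rw [continuous_iff_continuousAt]
    intro y₀
    obtain ⟨U, hUo, hyU, G, hGc, hG⟩ := covering_local_lift hcov H y₀
    have heq : Set.EqOn g G U := fun y hy => huniq y (g y) (G y) (hg y) (hG y hy)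
    exact (hGc.congr heq).continuousAt (hUo.mem_nhds hyU)
  · intro y
    obtain ⟨Γ, h1, h2, h3⟩ := hg y
    rw [← h3, h1 1]
    exact H.apply_one y

/-- On a nonempty compact connected Hausdorff topological manifold, a covering map
homotopic to the identity is injective. -/
theorem coveringMap_homotopic_id_injective
    {M : Type*} [TopologicalSpace M] [CompactSpace M] [ConnectedSpace M]
    [T2Space M] [Nonempty M] (n : ℕ)
    [ChartedSpace (EuclideanSpace ℝ (Fin n)) M]
    (f : C(M, M)) (hcov : IsCoveringMap f)
    (hhtpy : f.Homotopic (ContinuousMap.id M)) :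
    Function.Injective f := by
  obtain ⟨H⟩ := hhtpy
  obtain ⟨g, hgc, hfg⟩ := covering_section hcov H
  have hS : {x : M | g (f x) = x} = Set.univ := by
    apply IsClopen.eq_univ
    · constructor
      · exact isClosed_eq (hgc.comp f.continuous) continuous_id
      · rw [isOpen_iff_mem_nhds]
        intro x hx
        haveI := (hcov (f x)).1
        haveI : Nonempty ↥(f ⁻¹' {f x}) := ⟨⟨x, rfl⟩⟩
        set T := (hcov (f x)).toTrivialization with hT
        have hbx : f x ∈ T.baseSet := (hcov (f x)).mem_toTrivialization_baseSet
        have hxsrc : x ∈ T.source := T.mem_source.mpr hbx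
        set Sh : Set M := T.source ∩ (Prod.snd ∘ T) ⁻¹' {(T x).2} with hSh
        have hSho : IsOpen Sh := T.continuousOn_toFun.isOpen_inter_preimage T.open_source
          (continuous_snd.isOpen_preimage _ (isOpen_discrete _))
        have hN : IsOpen ((f ⁻¹' T.baseSet ∩ (g ∘ f) ⁻¹' Sh) ∩ Sh) :=
          ((T.open_baseSet.preimage f.continuous).inter
            (hSho.preimage (hgc.comp f.continuous))).inter hSho
        apply Filter.mem_of_superset (hN.mem_nhds ?_)
        · rintro z ⟨⟨hz1, hz2⟩, hz3⟩
          have h1 : g (f z) ∈ T.source := hz2.1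
          have h2 : z ∈ T.source := hz3.1
          have hff : f (g (f z)) = f z := hfg (f z)
          show g (f z) = z
          apply T.injOn h1 h2
          have hfst : (T (g (f z))).1 = (T z).1 := by
            rw [T.coe_fst h1, T.coe_fst h2, hff]
          have hsnd : (T (g (f z))).2 = (T z).2 :=
            (Set.mem_singleton_iff.mp hz2.2).trans
              (Set.mem_singleton_iff.mp hz3.2).symm
          exact Prod.ext hfst hsnd
        · have hgfx : g (f x) ∈ Sh := by
            rw [hSh]; rw [hx]; exact ⟨hxsrc, rfl⟩
          exact ⟨⟨hbx, hgfx⟩, hxsrc, rfl⟩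
    · exact ⟨g (f (Classical.arbitrary M)), by
        rw [Set.mem_setOf_eq, hfg (f (Classical.arbitrary M))]⟩
  intro a b hab
  have h := Set.eq_univ_iff_forall.mp hS
  calc a = g (f a) := (h a).symm
    _ = g (f b) := by rw [hab]
    _ = b := h b
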